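/- (Full surplus extraction in symmetric environments.) Consider n ≥ 2 bidders with values v_i ≥ 0 and a prior g that is symmetric: for every permutation σ of {1,…,n} and every vector w ∈ ℝ^n, ∑_{r : (v_1·r_1,…,v_n·r_n) = w} g(r) = ∑_{r : (v_1·r_1,…,v_n·r_n) = (w_{σ(1)},…,w_{σ(n)})} g(r). Then for every ε > 0 there exists a calibrated information structure x for g with Rev(x) ≥ ∑_r g(r)·max_i v_i·r_i − ε; that is, revenue arbitrarily close to the full social surplus can be extracted. -/

import Mathlib

open scoped Classical
set_option linter.unusedSectionVars false
set_option linter.unusedVariables false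
set_option linter.unusedTactic false

noncomputable section

/-- A finitely supported probability mass function on CTR vectors in [0,1]ⁿ. -/
def IsPriorN {n : ℕ} (g : (Fin n → ℝ) → ℝ) : Prop :=
  (Function.support g).Finite ∧ (∀ r, 0 ≤ g r) ∧
  (∀ r, g r ≠ 0 → ∀ i, 0 ≤ r i ∧ r i ≤ 1) ∧ (∑ᶠ r, g r) = 1

/-- An information structure for the prior `g`: finitely supported, nonnegative,
signals in [0,1]ⁿ, with `r`-marginal equal to `g`. -/
def IsInfoN {n : ℕ} (g : (Fin n → ℝ) → ℝ) (x : (Fin n → ℝ) × (Fin n → ℝ) → ℝ) : Prop :=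
  (Function.support x).Finite ∧ (∀ p, 0 ≤ x p) ∧
  (∀ p, x p ≠ 0 → ∀ i, 0 ≤ p.2 i ∧ p.2 i ≤ 1) ∧ (∀ r, (∑ᶠ s, x (r, s)) = g r)

/-- Calibration: the posterior mean of `rᵢ` given any signal value `c` of bidder `i`
equals `c`. -/
def CalibratedN {n : ℕ} (x : (Fin n → ℝ) × (Fin n → ℝ) → ℝ) : Prop :=
  ∀ i : Fin n, ∀ c : ℝ, 0 ≤ c → c ≤ 1 →
    (∑ᶠ p : (Fin n → ℝ) × (Fin n → ℝ), if p.2 i = c then x p * (p.1 i - c) else 0) = 0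

/-- The maximal value-weighted signal `max_j v_j s_j`. -/
def maxScore {n : ℕ} (v s : Fin n → ℝ) : ℝ := ⨆ i, v i * s i

/-- The set of winners `W(s) = {i : v_i s_i = max_j v_j s_j}`. -/
def winners {n : ℕ} (v s : Fin n → ℝ) : Finset (Fin n) :=
  Finset.univ.filter fun i => v i * s i = maxScore v s

/-- The highest competing value-weighted signal `max_{j ≠ i} v_j s_j`. -/
def maxOther {n : ℕ} (v s : Fin n → ℝ) (i : Fin n) : ℝ :=
  ⨆ j : {j : Fin n // j ≠ i}, v j.1 * s j.1

/-- Expected revenue of the click-through auction with uniform tie-breaking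
(division by zero is zero in Lean, matching the convention t/0 = 0). -/
def RevN {n : ℕ} (v : Fin n → ℝ) (x : (Fin n → ℝ) × (Fin n → ℝ) → ℝ) : ℝ :=
  ∑ᶠ p : (Fin n → ℝ) × (Fin n → ℝ), x p *
    (((winners v p.2).card : ℝ)⁻¹ *
      ∑ i ∈ winners v p.2, p.1 i * (maxOther v p.2 i / p.2 i))

namespace FSE

open Finset

lemma ciSup_eq_of {ι : Type*} [Nonempty ι] [Finite ι] {f : ι → ℝ} {M : ℝ}
    (h1 : ∀ i, f i ≤ M) (h2 : ∃ i, f i = M) : (⨆ i, f i) = M := by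
  obtain ⟨i, hi⟩ := h2
  exact le_antisymm (ciSup_le h1) (hi ▸ le_ciSup (Set.finite_range f).bddAbove i)

variable {n : ℕ}

/-- the score vector -/
def scoreV (v r : Fin n → ℝ) : Fin n → ℝ := fun i => v i * r i

/-- top score -/
def aTop (w : Fin n → ℝ) : ℝ := ⨆ i, w i

/-- attainers of the top score -/
def topSet (w : Fin n → ℝ) : Finset (Fin n) := univ.filter fun i => w i = aTop w

variable [Nonempty (Fin n)]

lemma le_aTop (w : Fin n → ℝ) (i : Fin n) : w i ≤ aTop w :=
  le_ciSup (Set.finite_range w).bddAbove i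

lemma topSet_nonempty (w : Fin n → ℝ) : (topSet w).Nonempty := by
  obtain ⟨i, hi⟩ := Finite.exists_max w
  exact ⟨i, mem_filter.2 ⟨mem_univ _, le_antisymm (le_aTop w i) (ciSup_le hi)⟩⟩

/-- canonical top bidder -/
def iTop (w : Fin n → ℝ) : Fin n := (topSet w).min' (topSet_nonempty w)

lemma w_iTop (w : Fin n → ℝ) : w (iTop w) = aTop w := by
  have := (topSet w).min'_mem (topSet_nonempty w)
  exact (mem_filter.1 this).2

/-- second-highest score -/
def bSec (w : Fin n → ℝ) : ℝ := ⨆ j : {j : Fin n // j ≠ iTop w}, w j.1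

/-- set of second-score attainers (excluding the top bidder) -/
def Jset (w : Fin n → ℝ) : Finset (Fin n) :=
  univ.filter fun j => j ≠ iTop w ∧ w j = bSec w

section TwoLe
variable (hn : 2 ≤ n)
include hn

lemma ne_nonempty (i : Fin n) : Nonempty {j : Fin n // j ≠ i} := by
  obtain ⟨j, hj⟩ := Fintype.exists_ne_of_one_lt_card (by simpa using (show 1 < n by omega)) i
  exact ⟨⟨j, hj⟩⟩

lemma le_bSec (w : Fin n → ℝ) {j : Fin n} (hj : j ≠ iTop w) : w j ≤ bSec w := by
  haveI := ne_nonempty hn (iTop w)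
  exact le_ciSup (f := fun k : {j : Fin n // j ≠ iTop w} => w k.1) (Set.finite_range _).bddAbove ⟨j, hj⟩

lemma bSec_attained (w : Fin n → ℝ) : ∃ j, j ≠ iTop w ∧ w j = bSec w := by
  haveI := ne_nonempty hn (iTop w)
  obtain ⟨⟨j, hj⟩, hmax⟩ := Finite.exists_max (fun j : {j : Fin n // j ≠ iTop w} => w j.1)
  refine ⟨j, hj, le_antisymm (le_bSec hn w hj) (ciSup_le fun k => hmax k)⟩

lemma Jset_nonempty (w : Fin n → ℝ) : (Jset w).Nonempty := by
  obtain ⟨j, h1, h2⟩ := bSec_attained hn w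
  exact ⟨j, mem_filter.2 ⟨mem_univ _, h1, h2⟩⟩

lemma bSec_le_aTop (w : Fin n → ℝ) : bSec w ≤ aTop w := by
  obtain ⟨j, _, h2⟩ := bSec_attained hn w
  exact h2 ▸ le_aTop w j

lemma bSec_nonneg (w : Fin n → ℝ) (hw : ∀ i, 0 ≤ w i) : 0 ≤ bSec w := by
  obtain ⟨j, _, h2⟩ := bSec_attained hn w
  exact h2 ▸ hw j

end TwoLe

lemma aTop_nonneg (w : Fin n → ℝ) (hw : ∀ i, 0 ≤ w i) : 0 ≤ aTop w :=
  le_trans (hw (iTop w)) (le_aTop w _)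

lemma mem_Jset {w : Fin n → ℝ} {j : Fin n} :
    j ∈ Jset w ↔ j ≠ iTop w ∧ w j = bSec w := by simp [Jset]

end FSE

namespace FSE
open Finset
variable {n : ℕ} [Nonempty (Fin n)]

/-- chain signal levels -/
def gam (K : ℕ) (w : Fin n → ℝ) (k : ℕ) : ℝ :=
  bSec w + (aTop w - bSec w) * k / (K + 1)

lemma gam_zero (K : ℕ) (w : Fin n → ℝ) : gam K w 0 = bSec w := by simp [gam]

lemma gam_top (K : ℕ) (w : Fin n → ℝ) : gam K w (K + 1) = aTop w := by
  have h : ((K : ℝ) + 1) ≠ 0 := by positivity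
  simp only [gam]
  push_cast
  field_simp
  ring

lemma bSec_le_gam (K : ℕ) (w : Fin n → ℝ) (hb : bSec w ≤ aTop w) (k : ℕ) :
    bSec w ≤ gam K w k := by
  have h1 : (0:ℝ) ≤ aTop w - bSec w := by linarith
  have : (0:ℝ) ≤ (aTop w - bSec w) * k / (K + 1) :=
    div_nonneg (mul_nonneg h1 (Nat.cast_nonneg _)) (by positivity)
  simp only [gam]; linarith

lemma gam_le_aTop (K : ℕ) (w : Fin n → ℝ) (hb : bSec w ≤ aTop w) {k : ℕ} (hk : k ≤ K + 1) :
    gam K w k ≤ aTop w := by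
  have hK : (0:ℝ) < (K : ℝ) + 1 := by positivity
  have hk' : (k : ℝ) ≤ (K : ℝ) + 1 := by exact_mod_cast hk
  have : (aTop w - bSec w) * k / (K + 1) ≤ (aTop w - bSec w) := by
    rw [div_le_iff₀ hK]
    nlinarith
  simp only [gam]; linarith

lemma gam_lt_succ (K : ℕ) (w : Fin n → ℝ) (hb : bSec w < aTop w) (k : ℕ) :
    gam K w k < gam K w (k + 1) := by
  have hK : (0:ℝ) < (K : ℝ) + 1 := by positivity
  have hX : (0:ℝ) < aTop w - bSec w := by linarith
  have h2 : (aTop w - bSec w) * (k:ℝ) / (K + 1) < (aTop w - bSec w) * ((k:ℕ)+1 : ℝ) / (K + 1) := by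
    rw [div_lt_div_iff₀ hK hK]
    nlinarith
  simp only [gam]
  push_cast at h2 ⊢
  linarith

/-- the fundamental binomial chain identity -/
lemma chain_identity (K : ℕ) (w : Fin n → ℝ) {k : ℕ} (hk : k < K) :
    (K.choose k : ℝ) * (aTop w - gam K w (k + 1))
      = (K.choose (k + 1) : ℝ) * (gam K w (k + 1) - bSec w) := by
  have h := Nat.choose_succ_right_eq K k
  have hcast : (K.choose (k+1) : ℝ) * ((k:ℝ) + 1) = (K.choose k : ℝ) * ((K:ℝ) - k) := by
    have := congrArg (fun m : ℕ => (m : ℝ)) h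
    push_cast [Nat.cast_sub hk.le] at this ⊢
    linarith [this]
  have hK : ((K : ℝ) + 1) ≠ 0 := by positivity
  simp only [gam]
  push_cast
  have hinv : ((K:ℝ) + 1) * ((K:ℝ) + 1)⁻¹ = 1 := mul_inv_cancel₀ hK
  linear_combination (-(aTop w - bSec w) * ((K:ℝ) + 1)⁻¹) * hcast - ((K.choose k : ℝ) * (aTop w - bSec w)) * hinv

/-- swap of a score vector -/
def swapW (w : Fin n → ℝ) (i j : Fin n) : Fin n → ℝ := fun ℓ => w (Equiv.swap i j ℓ)

section Swap
variable (hn : 2 ≤ n) {w : Fin n → ℝ} {j : Fin n}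
  (hj : j ∈ Jset w) (hstrict : bSec w < aTop w)
include hn hj hstrict

lemma swapW_apply_i : swapW w (iTop w) j (iTop w) = w j := by
  simp [swapW, Equiv.swap_apply_left]

lemma swapW_apply_j : swapW w (iTop w) j j = w (iTop w) := by
  simp [swapW, Equiv.swap_apply_right]

lemma swapW_apply_other {ℓ : Fin n} (h1 : ℓ ≠ iTop w) (h2 : ℓ ≠ j) :
    swapW w (iTop w) j ℓ = w ℓ := by
  simp [swapW, Equiv.swap_apply_of_ne_of_ne h1 h2]

lemma aTop_swapW : aTop (swapW w (iTop w) j) = aTop w := by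
  apply ciSup_eq_of
  · intro ℓ; exact le_aTop w _
  · refine ⟨j, ?_⟩
    rw [swapW_apply_j hn hj hstrict]
    exact w_iTop w

lemma topSet_swapW : topSet (swapW w (iTop w) j) = {j} := by
  obtain ⟨hji, hjb⟩ := mem_Jset.1 hj
  ext ℓ
  simp only [topSet, mem_filter, mem_univ, true_and, mem_singleton]
  rw [aTop_swapW hn hj hstrict]
  constructor
  · intro hℓ
    by_contra hne
    rcases eq_or_ne ℓ (iTop w) with h | h
    · rw [h, swapW_apply_i hn hj hstrict, hjb] at hℓ
      exact absurd hℓ (ne_of_lt hstrict)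
    · rw [swapW_apply_other hn hj hstrict h hne] at hℓ
      have := le_bSec hn w h
      rw [hℓ] at this
      exact absurd (lt_of_lt_of_le hstrict this) (lt_irrefl _)
  · rintro rfl
    rw [swapW_apply_j hn hj hstrict]
    exact w_iTop w

lemma iTop_swapW : iTop (swapW w (iTop w) j) = j := by
  have h1 : iTop (swapW w (iTop w) j) ∈ topSet (swapW w (iTop w) j) := Finset.min'_mem _ _
  rw [topSet_swapW hn hj hstrict] at h1
  exact mem_singleton.1 h1

lemma bSec_swapW : bSec (swapW w (iTop w) j) = bSec w := by
  obtain ⟨hji, hjb⟩ := mem_Jset.1 hj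
  haveI := ne_nonempty hn (iTop (swapW w (iTop w) j))
  apply ciSup_eq_of
  · rintro ⟨ℓ, hℓ⟩
    show swapW w (iTop w) j ℓ ≤ bSec w
    rw [iTop_swapW hn hj hstrict] at hℓ
    rcases eq_or_ne ℓ (iTop w) with h | h
    · rw [h, swapW_apply_i hn hj hstrict, hjb]
    · rw [swapW_apply_other hn hj hstrict h hℓ]
      exact le_bSec hn w h
  · refine ⟨⟨iTop w, by rw [iTop_swapW hn hj hstrict]; exact fun h => hji h.symm⟩, ?_⟩
    show swapW w (iTop w) j (iTop w) = bSec w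
    rw [swapW_apply_i hn hj hstrict, hjb]

lemma strict_swapW : bSec (swapW w (iTop w) j) < aTop (swapW w (iTop w) j) := by
  rw [bSec_swapW hn hj hstrict, aTop_swapW hn hj hstrict]; exact hstrict

lemma Jset_swapW : Jset (swapW w (iTop w) j) = insert (iTop w) ((Jset w).erase j) := by
  obtain ⟨hji, hjb⟩ := mem_Jset.1 hj
  ext ℓ
  rw [mem_Jset, iTop_swapW hn hj hstrict, bSec_swapW hn hj hstrict,
    mem_insert, mem_erase, mem_Jset]
  constructor
  · rintro ⟨hℓj, hℓb⟩
    rcases eq_or_ne ℓ (iTop w) with h | h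
    · exact Or.inl h
    · rw [swapW_apply_other hn hj hstrict h hℓj] at hℓb
      exact Or.inr ⟨hℓj, h, hℓb⟩
  · rintro (rfl | ⟨h1, h2, h3⟩)
    · exact ⟨fun h => hji h.symm, by rw [swapW_apply_i hn hj hstrict, hjb]⟩
    · exact ⟨h1, by rw [swapW_apply_other hn hj hstrict h2 h1, h3]⟩

lemma card_Jset_swapW : (Jset (swapW w (iTop w) j)).card = (Jset w).card := by
  rw [Jset_swapW hn hj hstrict]
  have hiT : iTop w ∉ (Jset w).erase j := by
    intro h
    exact absurd (mem_Jset.1 (mem_of_mem_erase h)).1 (by simp)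
  rw [card_insert_of_notMem hiT, card_erase_of_mem hj]
  have : 0 < (Jset w).card := card_pos.2 ⟨j, hj⟩
  omega

lemma gam_swapW (K k : ℕ) : gam K (swapW w (iTop w) j) k = gam K w k := by
  rw [gam, gam, bSec_swapW hn hj hstrict, aTop_swapW hn hj hstrict]

lemma swapW_invol : swapW (swapW w (iTop w) j) j (iTop w) = w := by
  funext ℓ
  simp only [swapW]
  rw [Equiv.swap_comm]
  simp

end Swap
end FSE

namespace FSE
open Finset
variable {n : ℕ} [Nonempty (Fin n)]

/-- signal profile for event (r, partner j, chain level k) -/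
def prof (v : Fin n → ℝ) (K : ℕ) (r : Fin n → ℝ) (j : Fin n) (k : ℕ) : Fin n → ℝ :=
  if aTop (scoreV v r) = 0 then r
  else fun ℓ => if ℓ = iTop (scoreV v r) then gam K (scoreV v r) (k + 1) / v ℓ
    else if ℓ = j then gam K (scoreV v r) k / v ℓ else r ℓ

def pt (v : Fin n → ℝ) (K : ℕ) (t : (Fin n → ℝ) × Fin n × ℕ) :
    (Fin n → ℝ) × (Fin n → ℝ) :=
  (t.1, prof v K t.1 t.2.1 t.2.2)

def wt (v : Fin n → ℝ) (g : (Fin n → ℝ) → ℝ) (K : ℕ) (t : (Fin n → ℝ) × Fin n × ℕ) : ℝ :=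
  if t.2.1 ∈ Jset (scoreV v t.1) then
    g t.1 * ((K.choose t.2.2 : ℝ) / 2 ^ K) / ((Jset (scoreV v t.1)).card : ℝ)
  else 0

def TI (S : Finset (Fin n → ℝ)) (K : ℕ) : Finset ((Fin n → ℝ) × Fin n × ℕ) :=
  S ×ˢ ((univ : Finset (Fin n)) ×ˢ range (K + 1))

def xC (v : Fin n → ℝ) (g : (Fin n → ℝ) → ℝ) (S : Finset (Fin n → ℝ)) (K : ℕ) :
    (Fin n → ℝ) × (Fin n → ℝ) → ℝ :=
  fun p => ∑ t ∈ TI S K, wt v g K t * (if p = pt v K t then 1 else 0)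

variable (v : Fin n → ℝ) (g : (Fin n → ℝ) → ℝ) (S : Finset (Fin n → ℝ)) (K : ℕ)

lemma xC_eq_zero {p : (Fin n → ℝ) × (Fin n → ℝ)}
    (h : ∀ t ∈ TI S K, p ≠ pt v K t) : xC v g S K p = 0 := by
  apply Finset.sum_eq_zero
  intro t ht
  simp [h t ht]

lemma xC_support_sub :
    Function.support (xC v g S K) ⊆ ↑((TI S K).image (pt v K)) := by
  intro p hp
  by_contra hpE
  exact hp (xC_eq_zero v g S K fun t ht h =>
    hpE (by rw [h]; exact mem_coe.2 (mem_image_of_mem _ ht)))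

lemma xC_ne_imp {p : (Fin n → ℝ) × (Fin n → ℝ)} (h : xC v g S K p ≠ 0) :
    ∃ t ∈ TI S K, wt v g K t ≠ 0 ∧ p = pt v K t := by
  by_contra hc
  push_neg at hc
  apply h
  apply Finset.sum_eq_zero
  intro t ht
  rcases eq_or_ne p (pt v K t) with he | he
  · rcases eq_or_ne (wt v g K t) 0 with hw | hw
    · rw [hw, zero_mul]
    · exact absurd he (hc t ht hw)
  · simp [he]

/-- master computation lemma -/
lemma finsum_xC_mul (F : (Fin n → ℝ) × (Fin n → ℝ) → ℝ) :
    (∑ᶠ p, xC v g S K p * F p) = ∑ t ∈ TI S K, wt v g K t * F (pt v K t) := by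
  have hsub : Function.support (fun p => xC v g S K p * F p)
      ⊆ ↑((TI S K).image (pt v K)) := by
    intro p hp
    have hx : xC v g S K p ≠ 0 := left_ne_zero_of_mul hp
    exact xC_support_sub v g S K (Function.mem_support.2 hx)
  rw [finsum_eq_sum_of_support_subset _ hsub]
  calc ∑ p ∈ (TI S K).image (pt v K), xC v g S K p * F p
      = ∑ p ∈ (TI S K).image (pt v K), ∑ t ∈ TI S K,
          wt v g K t * (if p = pt v K t then 1 else 0) * F p := by
        refine Finset.sum_congr rfl fun p _ => ?_
        rw [xC, Finset.sum_mul]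
    _ = ∑ t ∈ TI S K, ∑ p ∈ (TI S K).image (pt v K),
          wt v g K t * (if p = pt v K t then 1 else 0) * F p := Finset.sum_comm
    _ = ∑ t ∈ TI S K, wt v g K t * F (pt v K t) := by
        refine Finset.sum_congr rfl fun t ht => ?_
        rw [Finset.sum_eq_single (pt v K t)]
        · simp
        · intro p _ hne; simp [hne]
        · intro habs; exact absurd (mem_image_of_mem _ ht) habs

/-- slice computation lemma (for the marginal) -/
lemma finsum_xC_slice (r : Fin n → ℝ) :
    (∑ᶠ s, xC v g S K (r, s))
      = ∑ t ∈ TI S K, (if r = t.1 then wt v g K t else 0) := by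
  have hsub : Function.support (fun s => xC v g S K (r, s))
      ⊆ ↑((TI S K).image fun t => prof v K t.1 t.2.1 t.2.2) := by
    intro s hs
    obtain ⟨t, ht, -, hpt⟩ := xC_ne_imp v g S K (Function.mem_support.1 hs)
    have : s = prof v K t.1 t.2.1 t.2.2 := congrArg Prod.snd hpt
    rw [this]
    exact mem_coe.2 (mem_image_of_mem _ ht)
  rw [finsum_eq_sum_of_support_subset _ hsub]
  have hswap : ∀ s, xC v g S K (r, s) = ∑ t ∈ TI S K,
      wt v g K t * (if (r, s) = pt v K t then 1 else 0) := fun s => rfl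
  calc ∑ s ∈ (TI S K).image (fun t => prof v K t.1 t.2.1 t.2.2), xC v g S K (r, s)
      = ∑ t ∈ TI S K, ∑ s ∈ (TI S K).image (fun t => prof v K t.1 t.2.1 t.2.2),
          wt v g K t * (if (r, s) = pt v K t then 1 else 0) := by
        rw [← Finset.sum_comm]
        exact Finset.sum_congr rfl fun s _ => hswap s
    _ = ∑ t ∈ TI S K, (if r = t.1 then wt v g K t else 0) := by
        refine Finset.sum_congr rfl fun t ht => ?_
        rw [Finset.sum_eq_single (prof v K t.1 t.2.1 t.2.2)]
        · by_cases hr : r = t.1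
          · have hthis : (r, prof v K t.1 t.2.1 t.2.2) = pt v K t := by
              rw [pt, hr]
            rw [if_pos hthis, if_pos hr, mul_one]
          · have : (r, prof v K t.1 t.2.1 t.2.2) ≠ pt v K t := by
              intro h; exact hr (congrArg Prod.fst h)
            simp [this, hr]
        · intro s _ hne
          have : (r, s) ≠ pt v K t := by
            intro h
            exact hne (congrArg Prod.snd h)
          simp [this]
        · intro habs; exact absurd (mem_image_of_mem _ ht) habs

lemma wt_nonneg (hg0 : ∀ r, 0 ≤ g r) (t : (Fin n → ℝ) × Fin n × ℕ) :
    0 ≤ wt v g K t := by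
  unfold wt
  split
  · have := hg0 t.1
    positivity
  · exact le_refl 0

lemma xC_nonneg (hg0 : ∀ r, 0 ≤ g r) (p : (Fin n → ℝ) × (Fin n → ℝ)) :
    0 ≤ xC v g S K p := by
  apply Finset.sum_nonneg
  intro t _
  have h1 := wt_nonneg v g K hg0 t
  split_ifs with h
  · simpa using h1
  · simp

end FSE

namespace FSE
open Finset
variable {n : ℕ} [Nonempty (Fin n)]
variable (v : Fin n → ℝ) (g : (Fin n → ℝ) → ℝ) (S : Finset (Fin n → ℝ)) (K : ℕ)

lemma xC_marginal (hn : 2 ≤ n) (hS : ∀ r, g r ≠ 0 ↔ r ∈ S) (r : Fin n → ℝ) :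
    (∑ᶠ s, xC v g S K (r, s)) = g r := by
  rw [finsum_xC_slice]
  rw [TI, Finset.sum_product]
  by_cases hr : r ∈ S
  · rw [Finset.sum_eq_single r]
    · have hchoose : (∑ k ∈ range (K + 1), (K.choose k : ℝ)) = 2 ^ K := by
        exact_mod_cast congrArg (fun m : ℕ => (m : ℝ)) (Nat.sum_range_choose K)
      rw [Finset.sum_product]
      have hcard : ((Jset (scoreV v r)).card : ℝ) ≠ 0 := by
        have := Jset_nonempty hn (scoreV v r)
        exact_mod_cast Finset.card_ne_zero_of_mem this.choose_spec
      calc ∑ j ∈ univ, ∑ k ∈ range (K + 1), (if r = r then wt v g K (r, j, k) else 0)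
          = ∑ j ∈ univ, ∑ k ∈ range (K + 1), wt v g K (r, j, k) := by simp
        _ = ∑ j ∈ univ, (if j ∈ Jset (scoreV v r) then
              g r * ((2:ℝ) ^ K / 2 ^ K) / ((Jset (scoreV v r)).card : ℝ) else 0) := by
            refine Finset.sum_congr rfl fun j _ => ?_
            unfold wt
            by_cases hj : j ∈ Jset (scoreV v r)
            · simp only [hj, if_true]
              rw [← Finset.sum_div, ← Finset.mul_sum]
              congr 1
              rw [← Finset.sum_div, hchoose]
            · simp [hj]
        _ = ∑ j ∈ Jset (scoreV v r), g r / ((Jset (scoreV v r)).card : ℝ) := by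
            rw [Finset.sum_ite_mem, Finset.univ_inter]
            refine Finset.sum_congr rfl fun j _ => ?_
            congr 1
            rw [div_self (by positivity : ((2:ℝ)^K) ≠ 0), mul_one]
        _ = g r := by
            rw [Finset.sum_const, nsmul_eq_mul, mul_div_cancel₀ _ hcard]
    · intro r' _ hne
      apply Finset.sum_eq_zero; intro jk _
      rw [if_neg (fun h => hne h.symm)]
    · intro habs; exact absurd hr habs
  · have hg0 : g r = 0 := by
      by_contra h; exact hr ((hS r).1 h)
    rw [hg0]
    apply Finset.sum_eq_zero; intro r' hr'
    apply Finset.sum_eq_zero; intro jk _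
    rw [if_neg (fun h => hr (by rw [h]; exact hr'))]

lemma scoreV_nonneg' {v r : Fin n → ℝ} (hv : ∀ i, 0 ≤ v i)
    (hr : ∀ i, 0 ≤ r i ∧ r i ≤ 1) : ∀ ℓ, 0 ≤ scoreV v r ℓ :=
  fun ℓ => mul_nonneg (hv ℓ) (hr ℓ).1

lemma r_eq_div' {v r : Fin n → ℝ} {ℓ : Fin n} (h : v ℓ ≠ 0) :
    r ℓ = scoreV v r ℓ / v ℓ := by
  rw [scoreV]
  exact (mul_div_cancel_left₀ _ h).symm

section EventFacts

variable (hn : 2 ≤ n) {r : Fin n → ℝ}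
  (hv : ∀ i, 0 ≤ v i) (hr : ∀ i, 0 ≤ r i ∧ r i ≤ 1)
  (hva : ∀ ℓ, aTop (scoreV v r) ≤ v ℓ)

lemma maxScore_eq_aTop (s : Fin n → ℝ) : maxScore v s = aTop (scoreV v s) := rfl

lemma winners_eq_topSet (s : Fin n → ℝ) : winners v s = topSet (scoreV v s) := rfl

include hv hr hva hn

/-- in a class with positive top score, everyone's value is positive -/
lemma v_pos (ha : aTop (scoreV v r) ≠ 0) (ℓ : Fin n) : 0 < v ℓ :=
  lt_of_lt_of_le (lt_of_le_of_ne (aTop_nonneg _ (scoreV_nonneg' hv hr)) (Ne.symm ha)) (hva ℓ)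

lemma prof_eq_self_nonstrict
    (hns : bSec (scoreV v r) = aTop (scoreV v r)) {j : Fin n} (k : ℕ)
    (hj : j ∈ Jset (scoreV v r)) : prof v K r j k = r := by
  unfold prof
  split_ifs with h0
  · rfl
  · funext ℓ
    have hgam : ∀ m : ℕ, gam K (scoreV v r) m = aTop (scoreV v r) := by
      intro m; rw [gam, hns]; ring
    have hvℓ : (0:ℝ) < v ℓ := v_pos v hn hv hr hva h0 ℓ
    split_ifs with h1 h2
    · have hwℓ : scoreV v r ℓ = aTop (scoreV v r) := by
        rw [h1]; exact w_iTop _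
      rw [hgam, ← hwℓ]
      exact mul_div_cancel_left₀ _ hvℓ.ne'
    · have hwℓ : scoreV v r ℓ = aTop (scoreV v r) := by
        rw [h2, (mem_Jset.1 hj).2, hns]
      rw [hgam, ← hwℓ]
      exact mul_div_cancel_left₀ _ hvℓ.ne'
    · rfl

section Strict
variable (hstrict : bSec (scoreV v r) < aTop (scoreV v r))
  {j : Fin n} (hj : j ∈ Jset (scoreV v r)) {k : ℕ} (hk : k ≤ K)
include hstrict hj

lemma aTop_pos_strict : 0 < aTop (scoreV v r) :=
  lt_of_le_of_lt (bSec_nonneg hn _ (scoreV_nonneg' hv hr)) hstrict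

lemma prof_def_strict :
    prof v K r j k = fun ℓ =>
      if ℓ = iTop (scoreV v r) then gam K (scoreV v r) (k + 1) / v ℓ
      else if ℓ = j then gam K (scoreV v r) k / v ℓ else r ℓ := by
  rw [prof, if_neg (ne_of_gt (aTop_pos_strict v hn hv hr hva hstrict hj))]

lemma prof_apply_iTop :
    prof v K r j k (iTop (scoreV v r))
      = gam K (scoreV v r) (k + 1) / v (iTop (scoreV v r)) := by
  rw [prof_def_strict v K hn hv hr hva hstrict hj]
  show (if iTop (scoreV v r) = iTop (scoreV v r) then _ else _) = _
  rw [if_pos rfl]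

lemma prof_apply_j :
    prof v K r j k j = gam K (scoreV v r) k / v j := by
  rw [prof_def_strict v K hn hv hr hva hstrict hj]
  show (if j = iTop (scoreV v r) then _ else _) = _
  rw [if_neg (mem_Jset.1 hj).1, if_pos rfl]

lemma prof_apply_other {ℓ : Fin n} (h1 : ℓ ≠ iTop (scoreV v r)) (h2 : ℓ ≠ j) :
    prof v K r j k ℓ = r ℓ := by
  rw [prof_def_strict v K hn hv hr hva hstrict hj]
  show (if ℓ = iTop (scoreV v r) then _ else _) = _
  rw [if_neg h1, if_neg h2]

lemma scoreV_prof_iTop :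
    scoreV v (prof v K r j k) (iTop (scoreV v r)) = gam K (scoreV v r) (k + 1) := by
  have hvp := v_pos v hn hv hr hva (ne_of_gt (aTop_pos_strict v hn hv hr hva hstrict hj))
  show v _ * prof v K r j k (iTop (scoreV v r)) = _
  rw [prof_apply_iTop v K hn hv hr hva hstrict hj, mul_div_cancel₀ _ (hvp _).ne']

lemma scoreV_prof_j :
    scoreV v (prof v K r j k) j = gam K (scoreV v r) k := by
  have hvp := v_pos v hn hv hr hva (ne_of_gt (aTop_pos_strict v hn hv hr hva hstrict hj))
  show v _ * prof v K r j k j = _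
  rw [prof_apply_j v K hn hv hr hva hstrict hj, mul_div_cancel₀ _ (hvp _).ne']

lemma scoreV_prof_other {ℓ : Fin n} (h1 : ℓ ≠ iTop (scoreV v r)) (h2 : ℓ ≠ j) :
    scoreV v (prof v K r j k) ℓ = scoreV v r ℓ := by
  show v _ * prof v K r j k ℓ = _
  rw [prof_apply_other v K hn hv hr hva hstrict hj h1 h2]
  rfl

lemma scoreV_prof_lt {ℓ : Fin n} (h1 : ℓ ≠ iTop (scoreV v r)) :
    scoreV v (prof v K r j k) ℓ < gam K (scoreV v r) (k + 1) := by
  rcases eq_or_ne ℓ j with rfl | h2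
  · rw [scoreV_prof_j v K hn hv hr hva hstrict hj]
    exact gam_lt_succ K _ hstrict k
  · rw [scoreV_prof_other v K hn hv hr hva hstrict hj h1 h2]
    calc scoreV v r ℓ ≤ bSec (scoreV v r) := le_bSec hn _ h1
      _ ≤ gam K (scoreV v r) k := bSec_le_gam K _ hstrict.le k
      _ < gam K (scoreV v r) (k + 1) := gam_lt_succ K _ hstrict k

lemma maxScore_prof :
    maxScore v (prof v K r j k) = gam K (scoreV v r) (k + 1) := by
  rw [maxScore_eq_aTop]
  apply ciSup_eq_of
  · intro ℓ
    rcases eq_or_ne ℓ (iTop (scoreV v r)) with rfl | h1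
    · exact (scoreV_prof_iTop v K hn hv hr hva hstrict hj).le
    · exact (scoreV_prof_lt v K hn hv hr hva hstrict hj h1).le
  · exact ⟨iTop (scoreV v r), scoreV_prof_iTop v K hn hv hr hva hstrict hj⟩

lemma winners_prof :
    winners v (prof v K r j k) = {iTop (scoreV v r)} := by
  ext ℓ
  rw [winners, mem_filter, mem_singleton]
  constructor
  · rintro ⟨-, h⟩
    by_contra h1
    rw [show (v ℓ * prof v K r j k ℓ) = scoreV v (prof v K r j k) ℓ from rfl,
      maxScore_prof v K hn hv hr hva hstrict hj] at h
    exact absurd h (ne_of_lt (scoreV_prof_lt v K hn hv hr hva hstrict hj h1))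
  · rintro rfl
    refine ⟨mem_univ _, ?_⟩
    rw [show (v (iTop (scoreV v r)) * prof v K r j k (iTop (scoreV v r)))
        = scoreV v (prof v K r j k) (iTop (scoreV v r)) from rfl,
      maxScore_prof v K hn hv hr hva hstrict hj,
      scoreV_prof_iTop v K hn hv hr hva hstrict hj]

lemma maxOther_prof :
    maxOther v (prof v K r j k) (iTop (scoreV v r)) = gam K (scoreV v r) k := by
  haveI := ne_nonempty hn (iTop (scoreV v r))
  apply ciSup_eq_of
  · rintro ⟨ℓ, hℓ⟩
    show scoreV v (prof v K r j k) ℓ ≤ _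
    rcases eq_or_ne ℓ j with rfl | h2
    · exact (scoreV_prof_j v K hn hv hr hva hstrict hj).le
    · rw [scoreV_prof_other v K hn hv hr hva hstrict hj hℓ h2]
      exact le_trans (le_bSec hn _ hℓ) (bSec_le_gam K _ hstrict.le k)
  · refine ⟨⟨j, (mem_Jset.1 hj).1⟩, ?_⟩
    show scoreV v (prof v K r j k) j = _
    exact scoreV_prof_j v K hn hv hr hva hstrict hj

lemma gam_pos_succ : 0 < gam K (scoreV v r) (k + 1) :=
  lt_of_le_of_lt (le_trans (bSec_nonneg hn _ (scoreV_nonneg' hv hr))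
    (bSec_le_gam K _ hstrict.le k)) (gam_lt_succ K _ hstrict k)

/-- payment in a strict event: `a · γₖ / γₖ₊₁` -/
lemma payment_strict :
    ((winners v (prof v K r j k)).card : ℝ)⁻¹ *
      ∑ i ∈ winners v (prof v K r j k),
        r i * (maxOther v (prof v K r j k) i / prof v K r j k i)
    = aTop (scoreV v r) * gam K (scoreV v r) k / gam K (scoreV v r) (k + 1) := by
  have ha := aTop_pos_strict v hn hv hr hva hstrict hj
  have hvp := v_pos v hn hv hr hva ha.ne'
  have hγ1 := gam_pos_succ v K hn hv hr hva hstrict hj (k := k)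
  rw [winners_prof v K hn hv hr hva hstrict hj]
  rw [Finset.card_singleton, Finset.sum_singleton]
  rw [maxOther_prof v K hn hv hr hva hstrict hj]
  have hpi := prof_apply_iTop v K hn hv hr hva hstrict hj (k := k)
  have hri : r (iTop (scoreV v r)) = aTop (scoreV v r) / v (iTop (scoreV v r)) := by
    rw [show aTop (scoreV v r) = scoreV v r (iTop (scoreV v r)) from (w_iTop _).symm]
    exact r_eq_div' (hvp _).ne'
  rw [hpi, hri]
  rw [Nat.cast_one, inv_one, one_mul, div_div_eq_mul_div]
  rw [mul_comm (gam K (scoreV v r) k) (v (iTop (scoreV v r))), ← mul_div_assoc]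
  congr 1
  rw [div_mul_eq_mul_div, mul_comm (v _) (gam K (scoreV v r) k), ← mul_assoc,
    mul_div_assoc, div_self (hvp _).ne', mul_one]

end Strict
end EventFacts
end FSE

namespace FSE
open Finset
variable {n : ℕ} [Nonempty (Fin n)]
variable (v : Fin n → ℝ) (K : ℕ)

section EventFacts2
variable (hn : 2 ≤ n) {r : Fin n → ℝ}
  (hv : ∀ i, 0 ≤ v i) (hr : ∀ i, 0 ≤ r i ∧ r i ≤ 1)
  (hva : ∀ ℓ, aTop (scoreV v r) ≤ v ℓ)
include hn hv hr hva

lemma payment_nonstrict (hns : bSec (scoreV v r) = aTop (scoreV v r))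
    {j : Fin n} (k : ℕ) (hj : j ∈ Jset (scoreV v r)) :
    ((winners v (prof v K r j k)).card : ℝ)⁻¹ *
      ∑ i ∈ winners v (prof v K r j k),
        r i * (maxOther v (prof v K r j k) i / prof v K r j k i)
    = aTop (scoreV v r) := by
  rw [prof_eq_self_nonstrict v K hn hv hr hva hns k hj]
  rcases eq_or_ne (aTop (scoreV v r)) 0 with h0 | h0
  · have hw0 : ∀ ℓ, scoreV v r ℓ = 0 := fun ℓ =>
      le_antisymm (h0 ▸ le_aTop (scoreV v r) ℓ) (scoreV_nonneg' hv hr ℓ)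
    have hmo : ∀ i, maxOther v r i = 0 := by
      intro i
      haveI := ne_nonempty hn i
      apply ciSup_eq_of
      · rintro ⟨ℓ, -⟩
        show scoreV v r ℓ ≤ 0
        rw [hw0 ℓ]
      · obtain ⟨ℓ0, hℓ0⟩ := Fintype.exists_ne_of_one_lt_card (by simpa using (show 1 < n by omega)) i
        exact ⟨⟨ℓ0, hℓ0⟩, hw0 ℓ0⟩
    rw [h0]
    rw [Finset.sum_eq_zero, mul_zero]
    intro i _
    rw [hmo i, zero_div, mul_zero]
  · have ha : 0 < aTop (scoreV v r) :=
      lt_of_le_of_ne (aTop_nonneg _ (scoreV_nonneg' hv hr)) (Ne.symm h0)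
    have hjtop : j ∈ topSet (scoreV v r) :=
      mem_filter.2 ⟨mem_univ _, by rw [(mem_Jset.1 hj).2, hns]⟩
    have hitop : iTop (scoreV v r) ∈ topSet (scoreV v r) := Finset.min'_mem _ _
    have hterm : ∀ i ∈ winners v r,
        r i * (maxOther v r i / r i) = aTop (scoreV v r) := by
      intro i hi
      have hwi : scoreV v r i = aTop (scoreV v r) := (mem_filter.1 hi).2
      have hri : r i ≠ 0 := by
        intro h
        rw [scoreV, h, mul_zero] at hwi
        exact h0 hwi.symm
      have hmo : maxOther v r i = aTop (scoreV v r) := by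
        haveI := ne_nonempty hn i
        apply ciSup_eq_of
        · rintro ⟨ℓ, -⟩
          exact le_aTop (scoreV v r) ℓ
        · rcases eq_or_ne i (iTop (scoreV v r)) with heq | hne
          · refine ⟨⟨j, ?_⟩, ?_⟩
            · rw [heq]; exact (mem_Jset.1 hj).1
            · show scoreV v r j = _
              rw [(mem_Jset.1 hj).2, hns]
          · refine ⟨⟨iTop (scoreV v r), fun h => hne h.symm⟩, ?_⟩
            show scoreV v r (iTop (scoreV v r)) = _
            exact w_iTop _
      rw [hmo, mul_comm]
      exact div_mul_cancel₀ _ hri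
    rw [Finset.sum_congr rfl hterm, Finset.sum_const, nsmul_eq_mul]
    have hcard : ((winners v r).card : ℝ) ≠ 0 := by
      have : (winners v r).Nonempty := ⟨iTop (scoreV v r), hitop⟩
      exact_mod_cast Finset.card_ne_zero_of_mem this.choose_spec
    rw [← mul_assoc, inv_mul_cancel₀ hcard, one_mul]

/-- uniform per-event payment lower bound `a·k/(k+1)` -/
lemma payment_ge {j : Fin n} (hj : j ∈ Jset (scoreV v r)) {k : ℕ} (hk : k ≤ K) :
    aTop (scoreV v r) * k / ((k : ℝ) + 1)
      ≤ ((winners v (prof v K r j k)).card : ℝ)⁻¹ *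
        ∑ i ∈ winners v (prof v K r j k),
          r i * (maxOther v (prof v K r j k) i / prof v K r j k i) := by
  have ha0 : 0 ≤ aTop (scoreV v r) := aTop_nonneg _ (scoreV_nonneg' hv hr)
  have hk1 : (0:ℝ) < (k : ℝ) + 1 := by positivity
  rcases lt_or_eq_of_le (bSec_le_aTop hn (scoreV v r)) with hst | hns
  · rw [payment_strict v K hn hv hr hva hst hj]
    have hb0 : 0 ≤ bSec (scoreV v r) := bSec_nonneg hn _ (scoreV_nonneg' hv hr)
    have hγ1 := gam_pos_succ v K hn hv hr hva hst hj (k := k)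
    have key : (k : ℝ) * gam K (scoreV v r) (k + 1)
        ≤ ((k : ℝ) + 1) * gam K (scoreV v r) k := by
      have hd : gam K (scoreV v r) (k+1) = gam K (scoreV v r) k
          + (aTop (scoreV v r) - bSec (scoreV v r)) / ((K:ℝ) + 1) := by
        simp only [gam]; push_cast; ring
      have hkd : (k:ℝ) * ((aTop (scoreV v r) - bSec (scoreV v r)) / ((K:ℝ)+1))
          = gam K (scoreV v r) k - bSec (scoreV v r) := by
        simp only [gam]; push_cast; ring
      rw [hd, mul_add, hkd]
      nlinarith [hb0]
    rw [div_le_div_iff₀ hk1 hγ1]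
    nlinarith [mul_le_mul_of_nonneg_left key ha0]
  · rw [payment_nonstrict v K hn hv hr hva hns k hj]
    rw [div_le_iff₀ hk1]
    nlinarith [ha0]

lemma prof_bounds {j : Fin n} (hj : j ∈ Jset (scoreV v r)) {k : ℕ} (hk : k ≤ K) :
    ∀ i, 0 ≤ prof v K r j k i ∧ prof v K r j k i ≤ 1 := by
  intro i
  by_cases h0 : aTop (scoreV v r) = 0
  · rw [prof, if_pos h0]
    exact hr i
  · have ha : 0 < aTop (scoreV v r) :=
      lt_of_le_of_ne (aTop_nonneg _ (scoreV_nonneg' hv hr)) (Ne.symm h0)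
    have hvp := v_pos v hn hv hr hva h0
    have hb0 : 0 ≤ bSec (scoreV v r) := bSec_nonneg hn _ (scoreV_nonneg' hv hr)
    have hba : bSec (scoreV v r) ≤ aTop (scoreV v r) := bSec_le_aTop hn _
    rcases lt_or_eq_of_le hba with hst | hns
    · have hgam_nonneg : ∀ m : ℕ, 0 ≤ gam K (scoreV v r) m := fun m =>
        le_trans hb0 (bSec_le_gam K _ hba m)
      rcases eq_or_ne i (iTop (scoreV v r)) with rfl | h1
      · rw [prof_apply_iTop v K hn hv hr hva hst hj]
        constructor
        · exact div_nonneg (hgam_nonneg _) (hvp _).le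
        · rw [div_le_one (hvp _)]
          exact le_trans (gam_le_aTop K _ hba (by omega)) (hva _)
      · rcases eq_or_ne i j with rfl | h2
        · rw [prof_apply_j v K hn hv hr hva hst hj]
          constructor
          · exact div_nonneg (hgam_nonneg _) (hvp _).le
          · rw [div_le_one (hvp _)]
            exact le_trans (gam_le_aTop K _ hba (by omega)) (hva _)
        · rw [prof_apply_other v K hn hv hr hva hst hj h1 h2]
          exact hr i
    · rw [prof_eq_self_nonstrict v K hn hv hr hva hns k hj]
      exact hr i

end EventFacts2
end FSE

namespace FSE
open Finset
variable {n : ℕ} [Nonempty (Fin n)]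

/-- the telescoping/cancellation property of the binomial chain -/
lemma chain_cancel (K : ℕ) (w : Fin n → ℝ) (V c : ℝ) :
    ((∑ k ∈ range (K + 1), ((K.choose k : ℝ) / 2 ^ K) *
        (if gam K w (k + 1) / V = c then aTop w / V - c else 0))
      + ∑ k ∈ range (K + 1), ((K.choose k : ℝ) / 2 ^ K) *
        (if gam K w k / V = c then bSec w / V - c else 0)) = 0 := by
  rw [Finset.sum_range_succ, Finset.sum_range_succ']
  have h1 : ((K.choose K : ℝ) / 2 ^ K) *
      (if gam K w (K + 1) / V = c then aTop w / V - c else 0) = 0 := by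
    rw [gam_top]
    split_ifs with h
    · rw [← h, sub_self, mul_zero]
    · rw [mul_zero]
  have h2 : ((K.choose 0 : ℝ) / 2 ^ K) *
      (if gam K w 0 / V = c then bSec w / V - c else 0) = 0 := by
    rw [gam_zero]
    split_ifs with h
    · rw [← h, sub_self, mul_zero]
    · rw [mul_zero]
  rw [h1, h2, add_zero, add_zero]
  rw [← Finset.sum_add_distrib]
  apply Finset.sum_eq_zero
  intro k hk
  have hkK : k < K := mem_range.1 hk
  have hchain := chain_identity K w hkK
  split_ifs with h
  · rw [← h]
    linear_combination (1 / (2 ^ K * V)) * hchain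
  · rw [mul_zero, mul_zero, add_zero]

end FSE

namespace FSE
open Finset
variable {n : ℕ} [Nonempty (Fin n)]

/-- class-level calibration term for bidder `ℓ` at signal value `c` -/
def calTerm (v : Fin n → ℝ) (K : ℕ) (ℓ : Fin n) (c : ℝ)
    (w : Fin n → ℝ) (j : Fin n) (k : ℕ) : ℝ :=
  (if j ∈ Jset w then ((K.choose k : ℝ) / 2 ^ K) / ((Jset w).card : ℝ) else 0) *
  (if bSec w < aTop w then
    (if ℓ = iTop w then (if gam K w (k + 1) / v ℓ = c then w ℓ / v ℓ - c else 0)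
     else if ℓ = j then (if gam K w k / v ℓ = c then w ℓ / v ℓ - c else 0)
     else 0)
   else 0)

def calBranch (v : Fin n → ℝ) (K : ℕ) (ℓ : Fin n) (c : ℝ)
    (w : Fin n → ℝ) (j : Fin n) : ℝ :=
  ∑ k ∈ range (K + 1), calTerm v K ℓ c w j k

def GSum (v : Fin n → ℝ) (g : (Fin n → ℝ) → ℝ) (S : Finset (Fin n → ℝ))
    (w : Fin n → ℝ) : ℝ :=
  ∑ r ∈ S.filter (fun r => scoreV v r = w), g r

lemma calBranch_eq_zero_of_not_mem {v : Fin n → ℝ} {K : ℕ} {ℓ : Fin n} {c : ℝ}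
    {w : Fin n → ℝ} {j : Fin n} (hj : j ∉ Jset w) : calBranch v K ℓ c w j = 0 := by
  apply Finset.sum_eq_zero
  intro k _
  rw [calTerm, if_neg hj, zero_mul]

lemma calBranch_eq_zero_of_not_strict {v : Fin n → ℝ} {K : ℕ} {ℓ : Fin n} {c : ℝ}
    {w : Fin n → ℝ} {j : Fin n} (hw : ¬ bSec w < aTop w) : calBranch v K ℓ c w j = 0 := by
  apply Finset.sum_eq_zero
  intro k _
  rw [calTerm, if_neg hw, mul_zero]

/-- the two matched branches cancel -/
lemma calBranch_pair (v : Fin n → ℝ) (K : ℕ) (ℓ : Fin n) (c : ℝ)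
    (hn : 2 ≤ n) {w : Fin n → ℝ} {j : Fin n}
    (hj : j ∈ Jset w) (hstrict : bSec w < aTop w) :
    calBranch v K ℓ c w j
      + calBranch v K ℓ c (swapW w (iTop w) j) (iTop w) = 0 := by
  have hiT : iTop (swapW w (iTop w) j) = j := iTop_swapW hn hj hstrict
  have hJw' : iTop w ∈ Jset (swapW w (iTop w) j) := by
    rw [Jset_swapW hn hj hstrict]
    exact mem_insert_self _ _
  have hcard := card_Jset_swapW hn hj hstrict
  have hgam := gam_swapW hn hj hstrict (K := K)
  have hstrict' := strict_swapW hn hj hstrict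
  have haT := aTop_swapW hn hj hstrict
  have hbS := bSec_swapW hn hj hstrict
  have hji : j ≠ iTop w := (mem_Jset.1 hj).1
  set w' := swapW w (iTop w) j with hw'
  set m : ℝ := ((Jset w).card : ℝ) with hm
  -- three cases on ℓ
  rcases eq_or_ne ℓ (iTop w) with hli | hli
  · -- ℓ is the top bidder of w : winner role in w, partner role in w'
    have hwl : w ℓ = aTop w := by rw [hli]; exact w_iTop w
    have hw'l : w' ℓ = bSec w := by
      rw [hli, hw', swapW_apply_i hn hj hstrict]
      exact (mem_Jset.1 hj).2
    have hlj : ℓ ≠ j := by rw [hli]; exact fun h => hji h.symm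
    have e1 : calBranch v K ℓ c w j = (1 / m) * ∑ k ∈ range (K + 1),
        ((K.choose k : ℝ) / 2 ^ K) *
          (if gam K w (k + 1) / v ℓ = c then aTop w / v ℓ - c else 0) := by
      rw [calBranch, mul_sum]
      refine Finset.sum_congr rfl fun k _ => ?_
      rw [calTerm, if_pos hj, if_pos hstrict, if_pos hli, hwl]
      ring
    have e2 : calBranch v K ℓ c w' (iTop w) = (1 / m) * ∑ k ∈ range (K + 1),
        ((K.choose k : ℝ) / 2 ^ K) *
          (if gam K w k / v ℓ = c then bSec w / v ℓ - c else 0) := by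
      rw [calBranch, mul_sum]
      refine Finset.sum_congr rfl fun k _ => ?_
      rw [calTerm, if_pos hJw', if_pos hstrict', hiT, if_neg hlj, if_pos hli,
        gam_swapW hn hj hstrict, hw'l, hcard]
      ring
    rw [e1, e2, ← mul_add, chain_cancel K w (v ℓ) c, mul_zero]
  · rcases eq_or_ne ℓ j with hlj | hlj
    · -- ℓ = j : partner role in w, winner role in w'
      have hwl : w ℓ = bSec w := by rw [hlj]; exact (mem_Jset.1 hj).2
      have hw'l : w' ℓ = aTop w := by
        rw [hlj, hw', swapW_apply_j hn hj hstrict]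
        exact w_iTop w
      have e1 : calBranch v K ℓ c w j = (1 / m) * ∑ k ∈ range (K + 1),
          ((K.choose k : ℝ) / 2 ^ K) *
            (if gam K w k / v ℓ = c then bSec w / v ℓ - c else 0) := by
        rw [calBranch, mul_sum]
        refine Finset.sum_congr rfl fun k _ => ?_
        rw [calTerm, if_pos hj, if_pos hstrict, if_neg hli, if_pos hlj, hwl]
        ring
      have e2 : calBranch v K ℓ c w' (iTop w) = (1 / m) * ∑ k ∈ range (K + 1),
          ((K.choose k : ℝ) / 2 ^ K) *
            (if gam K w (k + 1) / v ℓ = c then aTop w / v ℓ - c else 0) := by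
        rw [calBranch, mul_sum]
        refine Finset.sum_congr rfl fun k _ => ?_
        rw [calTerm, if_pos hJw', if_pos hstrict', hiT, if_pos hlj,
          gam_swapW hn hj hstrict, hw'l, hcard]
        ring
      rw [e1, e2, add_comm, ← mul_add, chain_cancel K w (v ℓ) c, mul_zero]
    · -- bystander : both branches vanish
      have e1 : calBranch v K ℓ c w j = 0 := by
        apply Finset.sum_eq_zero
        intro k _
        rw [calTerm, if_pos hj, if_pos hstrict, if_neg hli, if_neg hlj, mul_zero]
      have e2 : calBranch v K ℓ c w' (iTop w) = 0 := by
        apply Finset.sum_eq_zero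
        intro k _
        rw [calTerm, if_pos hJw', if_pos hstrict', hiT, if_neg hlj, if_neg hli, mul_zero]
      rw [e1, e2, add_zero]

end FSE

namespace FSE
open Finset
variable {n : ℕ} [Nonempty (Fin n)]
variable (v : Fin n → ℝ) (g : (Fin n → ℝ) → ℝ) (S : Finset (Fin n → ℝ)) (K : ℕ)

lemma GSum_pos (hS : ∀ r, g r ≠ 0 ↔ r ∈ S) (hg0 : ∀ r, 0 ≤ g r)
    {w : Fin n → ℝ} (hw : w ∈ S.image (scoreV v)) : 0 < GSum v g S w := by
  obtain ⟨r0, hr0, hr0w⟩ := Finset.mem_image.1 hw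
  have hmem : r0 ∈ S.filter (fun r => scoreV v r = w) := mem_filter.2 ⟨hr0, hr0w⟩
  have hpos : 0 < g r0 := lt_of_le_of_ne (hg0 r0) (Ne.symm ((hS r0).2 hr0))
  exact lt_of_lt_of_le hpos (Finset.single_le_sum (fun r _ => hg0 r) hmem)

lemma mem_image_of_GSum_ne (hS : ∀ r, g r ≠ 0 ↔ r ∈ S)
    {w : Fin n → ℝ} (hw : GSum v g S w ≠ 0) : w ∈ S.image (scoreV v) := by
  obtain ⟨r, hr, hgr⟩ := Finset.exists_ne_zero_of_sum_ne_zero hw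
  obtain ⟨hrS, hrw⟩ := mem_filter.1 hr
  exact Finset.mem_image.2 ⟨r, hrS, hrw⟩

lemma xC_calibrated
    (hn : 2 ≤ n) (hv : ∀ i, 0 ≤ v i)
    (hS : ∀ r, g r ≠ 0 ↔ r ∈ S) (hg0 : ∀ r, 0 ≤ g r)
    (hr01 : ∀ r ∈ S, ∀ i, 0 ≤ r i ∧ r i ≤ 1)
    (hva : ∀ r ∈ S, ∀ ℓ, aTop (scoreV v r) ≤ v ℓ)
    (hG : ∀ (w : Fin n → ℝ) (i j : Fin n),
      GSum v g S w = GSum v g S (swapW w i j))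
    (ℓ : Fin n) (c : ℝ) :
    (∑ᶠ p : (Fin n → ℝ) × (Fin n → ℝ),
      if p.2 ℓ = c then xC v g S K p * (p.1 ℓ - c) else 0) = 0 := by
  classical
  have step0 : ∀ p : (Fin n → ℝ) × (Fin n → ℝ),
      (if p.2 ℓ = c then xC v g S K p * (p.1 ℓ - c) else 0)
        = xC v g S K p * (if p.2 ℓ = c then p.1 ℓ - c else 0) := by
    intro p
    split_ifs <;> simp
  rw [finsum_congr step0, finsum_xC_mul]
  -- pointwise class-level identification
  have step1 : ∀ t ∈ TI S K,
      wt v g K t * (if (pt v K t).2 ℓ = c then (pt v K t).1 ℓ - c else 0)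
        = g t.1 * calTerm v K ℓ c (scoreV v t.1) t.2.1 t.2.2 := by
    rintro ⟨r, j, k⟩ ht
    obtain ⟨hrS, hjk⟩ := Finset.mem_product.1 ht
    have hr := hr01 r hrS
    have hvar := hva r hrS
    by_cases hj : j ∈ Jset (scoreV v r)
    · have hwt : wt v g K (r, j, k)
          = g r * ((K.choose k : ℝ) / 2 ^ K) / ((Jset (scoreV v r)).card : ℝ) := by
        rw [wt, if_pos hj]
      rw [hwt, calTerm, if_pos hj]
      have hFeq : (if (pt v K (r, j, k)).2 ℓ = c then (pt v K (r, j, k)).1 ℓ - c else 0)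
          = (if bSec (scoreV v r) < aTop (scoreV v r) then
              (if ℓ = iTop (scoreV v r) then
                (if gam K (scoreV v r) (k + 1) / v ℓ = c then scoreV v r ℓ / v ℓ - c else 0)
               else if ℓ = j then
                (if gam K (scoreV v r) k / v ℓ = c then scoreV v r ℓ / v ℓ - c else 0)
               else 0)
             else 0) := by
        show (if prof v K r j k ℓ = c then r ℓ - c else 0) = _
        by_cases hst : bSec (scoreV v r) < aTop (scoreV v r)
        · rw [if_pos hst]
          have hvp := v_pos v hn hv hr hvar
            (ne_of_gt (aTop_pos_strict v hn hv hr hvar hst hj))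
          rcases eq_or_ne ℓ (iTop (scoreV v r)) with hli | hli
          · rw [if_pos hli, hli, prof_apply_iTop v K hn hv hr hvar hst hj,
              ← r_eq_div' (hvp _).ne']
          · rw [if_neg hli]
            rcases eq_or_ne ℓ j with hlj | hlj
            · rw [if_pos hlj, hlj, prof_apply_j v K hn hv hr hvar hst hj,
                ← r_eq_div' (hvp _).ne']
            · rw [if_neg hlj, prof_apply_other v K hn hv hr hvar hst hj hli hlj]
              split_ifs with hc
              · rw [hc, sub_self]
              · rfl
        · rw [if_neg hst]
          have hns : bSec (scoreV v r) = aTop (scoreV v r) :=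
            le_antisymm (bSec_le_aTop hn _) (not_lt.1 hst)
          rw [prof_eq_self_nonstrict v K hn hv hr hvar hns k hj]
          split_ifs with hc
          · rw [hc, sub_self]
          · rfl
      rw [hFeq]
      ring
    · have hwt : wt v g K (r, j, k) = 0 := by rw [wt, if_neg hj]
      rw [hwt, calTerm, if_neg hj, zero_mul, zero_mul, mul_zero]
  rw [Finset.sum_congr rfl step1]
  -- regroup by r then by class
  rw [TI, Finset.sum_product]
  have step2 : ∀ r ∈ S,
      (∑ jk ∈ (univ : Finset (Fin n)) ×ˢ range (K + 1),
        g r * calTerm v K ℓ c (scoreV v r) jk.1 jk.2)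
      = g r * ∑ j ∈ (univ : Finset (Fin n)), calBranch v K ℓ c (scoreV v r) j := by
    intro r _
    rw [← Finset.mul_sum]
    congr 1
    rw [Finset.sum_product]
    rfl
  rw [Finset.sum_congr rfl step2]
  have hmaps : ∀ r ∈ S, scoreV v r ∈ S.image (scoreV v) :=
    fun r hr => mem_image_of_mem _ hr
  rw [← Finset.sum_fiberwise_of_maps_to hmaps
    (fun r => g r * ∑ j ∈ (univ : Finset (Fin n)), calBranch v K ℓ c (scoreV v r) j)]
  have step3 : ∀ w ∈ S.image (scoreV v),
      (∑ r ∈ S.filter (fun r => scoreV v r = w),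
        g r * ∑ j ∈ (univ : Finset (Fin n)), calBranch v K ℓ c (scoreV v r) j)
      = GSum v g S w * ∑ j ∈ (univ : Finset (Fin n)), calBranch v K ℓ c w j := by
    intro w _
    rw [GSum, Finset.sum_mul]
    refine Finset.sum_congr rfl fun r hr => ?_
    rw [(mem_filter.1 hr).2]
  rw [Finset.sum_congr rfl step3]
  -- restrict to strict classes
  rw [← Finset.sum_filter_of_ne (p := fun w => bSec w < aTop w)
    (by
      intro w _ hne
      by_contra hst
      apply hne
      rw [Finset.sum_eq_zero, mul_zero]
      intro j _
      exact calBranch_eq_zero_of_not_strict hst)]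
  -- flatten to branch pairs
  have step4 : ∀ w ∈ (S.image (scoreV v)).filter (fun w => bSec w < aTop w),
      GSum v g S w * ∑ j ∈ (univ : Finset (Fin n)), calBranch v K ℓ c w j
        = ∑ j ∈ (univ : Finset (Fin n)), GSum v g S w * calBranch v K ℓ c w j :=
    fun w _ => Finset.mul_sum _ _ _
  rw [Finset.sum_congr rfl step4, ← Finset.sum_product']
  -- cancel by the involution
  set P := ((S.image (scoreV v)).filter (fun w => bSec w < aTop w)) ×ˢ
    (univ : Finset (Fin n)) with hP
  set f : (Fin n → ℝ) × Fin n → ℝ :=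
    fun b => GSum v g S b.1 * calBranch v K ℓ c b.1 b.2 with hf
  show ∑ b ∈ P, f b = 0
  have hmemP : ∀ b : (Fin n → ℝ) × Fin n, b ∈ P ↔
      (b.1 ∈ S.image (scoreV v) ∧ bSec b.1 < aTop b.1) := by
    intro b
    rw [hP, Finset.mem_product, Finset.mem_filter]
    simp
  refine Finset.sum_involution
    (fun b _ => if b.2 ∈ Jset b.1 then (swapW b.1 (iTop b.1) b.2, iTop b.1) else b)
    ?_ ?_ ?_ ?_
  · -- f b + f (ι b) = 0
    intro b hb
    beta_reduce
    obtain ⟨hbi, hbs⟩ := (hmemP b).1 hb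
    by_cases hj : b.2 ∈ Jset b.1
    · rw [if_pos hj]
      have hGb : GSum v g S (swapW b.1 (iTop b.1) b.2) = GSum v g S b.1 :=
        (hG b.1 (iTop b.1) b.2).symm
    -- f b + f (w', i) = GS * (branch + branch') = 0
      show GSum v g S b.1 * calBranch v K ℓ c b.1 b.2
        + GSum v g S (swapW b.1 (iTop b.1) b.2)
          * calBranch v K ℓ c (swapW b.1 (iTop b.1) b.2) (iTop b.1) = 0
      rw [hGb, ← mul_add, calBranch_pair v K ℓ c hn hj hbs, mul_zero]
    · rw [if_neg hj]
      show f b + f b = 0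
      have : f b = 0 := by
        show GSum v g S b.1 * calBranch v K ℓ c b.1 b.2 = 0
        rw [calBranch_eq_zero_of_not_mem hj, mul_zero]
      rw [this, add_zero]
  · -- f b ≠ 0 → ι b ≠ b
    intro b hb hfb
    beta_reduce
    have hj : b.2 ∈ Jset b.1 := by
      by_contra hj
      apply hfb
      show GSum v g S b.1 * calBranch v K ℓ c b.1 b.2 = 0
      rw [calBranch_eq_zero_of_not_mem hj, mul_zero]
    rw [if_pos hj]
    intro he
    have h2 : iTop b.1 = b.2 := congrArg Prod.snd he
    exact (mem_Jset.1 hj).1 h2.symm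
  · -- ι b ∈ P
    intro b hb
    beta_reduce
    obtain ⟨hbi, hbs⟩ := (hmemP b).1 hb
    by_cases hj : b.2 ∈ Jset b.1
    · rw [if_pos hj]
      rw [hmemP]
      constructor
      · apply mem_image_of_GSum_ne v g S hS
        rw [← hG b.1 (iTop b.1) b.2]
        exact (GSum_pos v g S hS hg0 hbi).ne'
      · exact strict_swapW hn hj hbs
    · rw [if_neg hj]; exact hb
  · -- involution
    intro b hb
    beta_reduce
    obtain ⟨hbi, hbs⟩ := (hmemP b).1 hb
    by_cases hj : b.2 ∈ Jset b.1
    · rw [if_pos hj]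
      have hiT : iTop (swapW b.1 (iTop b.1) b.2) = b.2 := iTop_swapW hn hj hbs
      have hJw' : iTop b.1 ∈ Jset (swapW b.1 (iTop b.1) b.2) := by
        rw [Jset_swapW hn hj hbs]
        exact mem_insert_self _ _
      rw [if_pos hJw']
      have hsw : swapW (swapW b.1 (iTop b.1) b.2)
          (iTop (swapW b.1 (iTop b.1) b.2)) (iTop b.1) = b.1 := by
        rw [hiT]
        exact swapW_invol hn hj hbs
      rw [Prod.ext_iff]
      exact ⟨hsw, hiT⟩
    · rw [if_neg hj, if_neg hj]

end FSE

namespace FSE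
open Finset
variable {n : ℕ} [Nonempty (Fin n)]

lemma sum_choose_div_real (K : ℕ) :
    (∑ k ∈ range (K + 1), (K.choose k : ℝ)) = 2 ^ K := by
  exact_mod_cast congrArg (fun m : ℕ => (m : ℝ)) (Nat.sum_range_choose K)

/-- expected payment fraction of the binomial chain -/
lemma revenue_chain_bound (K : ℕ) :
    (1 : ℝ) - 2 / ((K : ℝ) + 1)
      ≤ ∑ k ∈ range (K + 1), ((K.choose k : ℝ) / 2 ^ K) * ((k : ℝ) / ((k : ℝ) + 1)) := by
  have h2K : ((2 : ℝ) ^ K) ≠ 0 := by positivity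
  have hK1 : ((K : ℝ) + 1) ≠ 0 := by positivity
  have hsplit : ∀ k ∈ range (K + 1),
      ((K.choose k : ℝ) / 2 ^ K) * ((k : ℝ) / ((k : ℝ) + 1))
        = (K.choose k : ℝ) / 2 ^ K - ((K.choose k : ℝ) / 2 ^ K) * (1 / ((k : ℝ) + 1)) := by
    intro k _
    have hk1 : ((k : ℝ) + 1) ≠ 0 := by positivity
    field_simp
    ring
  rw [Finset.sum_congr rfl hsplit, Finset.sum_sub_distrib]
  have hone : (∑ k ∈ range (K + 1), (K.choose k : ℝ) / 2 ^ K) = 1 := by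
    rw [← Finset.sum_div, sum_choose_div_real, div_self h2K]
  rw [hone]
  have hterm : ∀ k ∈ range (K + 1),
      ((K.choose k : ℝ) / 2 ^ K) * (1 / ((k : ℝ) + 1))
        = (((K + 1).choose (k + 1) : ℝ)) / (((K : ℝ) + 1) * 2 ^ K) := by
    intro k _
    have hk1 : ((k : ℝ) + 1) ≠ 0 := by positivity
    have hc : ((K : ℝ) + 1) * (K.choose k : ℝ) = ((K + 1).choose (k + 1) : ℝ) * ((k : ℝ) + 1) := by
      have := congrArg (fun m : ℕ => (m : ℝ)) (Nat.add_one_mul_choose_eq K k)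
      push_cast at this
      linarith [this]
    rw [div_mul_div_comm, mul_one, div_eq_div_iff (by positivity) (by positivity)]
    linear_combination ((2:ℝ)^K) * hc
  rw [Finset.sum_congr rfl hterm, ← Finset.sum_div]
  have hsum : (∑ k ∈ range (K + 1), ((K + 1).choose (k + 1) : ℝ)) ≤ 2 ^ (K + 1) := by
    have hN : (∑ k ∈ range (K + 2), ((K + 1).choose k)) = 2 ^ (K + 1) :=
      Nat.sum_range_choose (K + 1)
    have hsplit2 : (∑ k ∈ range (K + 2), ((K + 1).choose k))
        = (∑ k ∈ range (K + 1), ((K + 1).choose (k + 1))) + (K + 1).choose 0 :=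
      Finset.sum_range_succ' _ _
    have : (∑ k ∈ range (K + 1), ((K + 1).choose (k + 1))) ≤ 2 ^ (K + 1) := by omega
    exact_mod_cast this
  have hpos : (0 : ℝ) < ((K : ℝ) + 1) * 2 ^ K := by positivity
  have hdiv : (∑ k ∈ range (K + 1), ((K + 1).choose (k + 1) : ℝ)) / (((K : ℝ) + 1) * 2 ^ K)
      ≤ (2 : ℝ) ^ (K + 1) / (((K : ℝ) + 1) * 2 ^ K) := by gcongr
  have heq : ((2 : ℝ) ^ (K + 1)) / (((K : ℝ) + 1) * 2 ^ K) = 2 / ((K : ℝ) + 1) := by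
    rw [pow_succ]
    field_simp
  rw [heq] at hdiv
  linarith [hdiv]

end FSE

namespace FSE
open Finset
variable {n : ℕ} [Nonempty (Fin n)]
variable (v : Fin n → ℝ) (g : (Fin n → ℝ) → ℝ) (S : Finset (Fin n → ℝ)) (K : ℕ)

lemma xC_revenue (hn : 2 ≤ n) (hv : ∀ i, 0 ≤ v i)
    (hS : ∀ r, g r ≠ 0 ↔ r ∈ S) (hg0 : ∀ r, 0 ≤ g r)
    (hr01 : ∀ r ∈ S, ∀ i, 0 ≤ r i ∧ r i ≤ 1)
    (hva : ∀ r ∈ S, ∀ ℓ, aTop (scoreV v r) ≤ v ℓ) :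
    ((1 : ℝ) - 2 / ((K : ℝ) + 1)) * (∑ r ∈ S, g r * aTop (scoreV v r))
      ≤ RevN v (xC v g S K) := by
  rw [RevN, finsum_xC_mul]
  -- lower bound each event's payment
  have hstep : ∀ t ∈ TI S K,
      wt v g K t * (aTop (scoreV v t.1) * (t.2.2 : ℝ) / ((t.2.2 : ℝ) + 1))
        ≤ wt v g K t * (((winners v (pt v K t).2).card : ℝ)⁻¹ *
            ∑ i ∈ winners v (pt v K t).2,
              (pt v K t).1 i * (maxOther v (pt v K t).2 i / (pt v K t).2 i)) := by
    rintro ⟨r, j, k⟩ ht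
    obtain ⟨hrS, hjk⟩ := Finset.mem_product.1 ht
    have hk : k ≤ K := by
      have h : k ∈ range (K+1) := (Finset.mem_product.1 hjk).2
      exact Nat.lt_succ_iff.mp (Finset.mem_range.1 h)
    by_cases hj : j ∈ Jset (scoreV v r)
    · apply mul_le_mul_of_nonneg_left _ (wt_nonneg v g K hg0 _)
      exact payment_ge v K hn hv (hr01 r hrS) (hva r hrS) hj hk
    · have hwt : wt v g K (r, j, k) = 0 := by rw [wt, if_neg hj]
      rw [hwt, zero_mul, zero_mul]
  refine le_trans ?_ (Finset.sum_le_sum hstep)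
  -- compute the lower-bound sum exactly
  rw [TI, Finset.sum_product]
  have hinner : ∀ r ∈ S,
      (∑ jk ∈ (univ : Finset (Fin n)) ×ˢ range (K + 1),
        wt v g K (r, jk.1, jk.2) * (aTop (scoreV v r) * (jk.2 : ℝ) / ((jk.2 : ℝ) + 1)))
      = g r * aTop (scoreV v r) *
          ∑ k ∈ range (K + 1), ((K.choose k : ℝ) / 2 ^ K) * ((k : ℝ) / ((k : ℝ) + 1)) := by
    intro r hrS
    have hcard : ((Jset (scoreV v r)).card : ℝ) ≠ 0 := by
      have := Jset_nonempty hn (scoreV v r)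
      exact_mod_cast Finset.card_ne_zero_of_mem this.choose_spec
    rw [Finset.sum_product]
    have hj_collapse : ∀ j ∈ (univ : Finset (Fin n)),
        (∑ k ∈ range (K + 1),
          wt v g K (r, j, k) * (aTop (scoreV v r) * (k : ℝ) / ((k : ℝ) + 1)))
        = (if j ∈ Jset (scoreV v r) then
            (g r * aTop (scoreV v r) / ((Jset (scoreV v r)).card : ℝ)) *
              ∑ k ∈ range (K + 1), ((K.choose k : ℝ) / 2 ^ K) * ((k : ℝ) / ((k : ℝ) + 1))
          else 0) := by
      intro j _
      by_cases hj : j ∈ Jset (scoreV v r)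
      · rw [if_pos hj, Finset.mul_sum]
        refine Finset.sum_congr rfl fun k _ => ?_
        rw [wt, if_pos hj]
        ring
      · rw [if_neg hj]
        apply Finset.sum_eq_zero
        intro k _
        rw [wt, if_neg hj, zero_mul]
    rw [Finset.sum_congr rfl hj_collapse, Finset.sum_ite_mem, Finset.univ_inter,
      Finset.sum_const, nsmul_eq_mul]
    field_simp
  rw [Finset.sum_congr rfl hinner]
  have hfac : ∀ r ∈ S,
      ((1 : ℝ) - 2 / ((K : ℝ) + 1)) * (g r * aTop (scoreV v r))
        ≤ g r * aTop (scoreV v r) *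
            ∑ k ∈ range (K + 1), ((K.choose k : ℝ) / 2 ^ K) * ((k : ℝ) / ((k : ℝ) + 1)) := by
    intro r hrS
    have hga : 0 ≤ g r * aTop (scoreV v r) :=
      mul_nonneg (hg0 r) (aTop_nonneg _ (scoreV_nonneg' hv (hr01 r hrS)))
    rw [mul_comm ((1 : ℝ) - 2 / ((K : ℝ) + 1))]
    exact mul_le_mul_of_nonneg_left (revenue_chain_bound K) hga
  calc ((1 : ℝ) - 2 / ((K : ℝ) + 1)) * ∑ r ∈ S, g r * aTop (scoreV v r)
      = ∑ r ∈ S, ((1 : ℝ) - 2 / ((K : ℝ) + 1)) * (g r * aTop (scoreV v r)) := by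
        rw [Finset.mul_sum]
    _ ≤ _ := Finset.sum_le_sum hfac

end FSE

/-- full surplus extraction in symmetric environments: if the
distribution of the value-weighted CTR vector is exchangeable, calibrated
information structures can extract revenue arbitrarily close to the full social
surplus. -/
theorem full_surplus_extraction_symmetric
    (n : ℕ) (hn : 2 ≤ n) (v : Fin n → ℝ) (hv : ∀ i, 0 ≤ v i)
    (g : (Fin n → ℝ) → ℝ) (hg : IsPriorN g)
    (hsym : ∀ σ : Equiv.Perm (Fin n), ∀ w : Fin n → ℝ,
      (∑ᶠ r : Fin n → ℝ, if (fun i => v i * r i) = w then g r else 0)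
        = ∑ᶠ r : Fin n → ℝ, if (fun i => v i * r i) = (fun i => w (σ i)) then g r else 0)
    (ε : ℝ) (hε : 0 < ε) :
    ∃ x : (Fin n → ℝ) × (Fin n → ℝ) → ℝ,
      IsInfoN g x ∧ CalibratedN x ∧
      (∑ᶠ r : Fin n → ℝ, g r * (⨆ i, v i * r i)) - ε ≤ RevN v x := by
  classical
  haveI : Nonempty (Fin n) := ⟨⟨0, by omega⟩⟩
  obtain ⟨hgfin, hg0, hg01, hgsum⟩ := hg
  set S : Finset (Fin n → ℝ) := hgfin.toFinset with hSdef
  have hS : ∀ r, g r ≠ 0 ↔ r ∈ S := by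
    intro r
    rw [hSdef, Set.Finite.mem_toFinset, Function.mem_support]
  have hr01 : ∀ r ∈ S, ∀ i, 0 ≤ r i ∧ r i ≤ 1 := fun r hr i => hg01 r ((hS r).2 hr) i
  have hGfin : ∀ w : Fin n → ℝ,
      (∑ᶠ r : Fin n → ℝ, if (fun i => v i * r i) = w then g r else 0)
        = FSE.GSum v g S w := by
    intro w
    have hsub : Function.support
        (fun r => if (fun i => v i * r i) = w then g r else 0) ⊆ ↑S := by
      intro r hr
      apply (hS r).1
      intro h
      apply hr
      simp [h]
    rw [finsum_eq_sum_of_support_subset _ hsub, FSE.GSum, Finset.sum_filter]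
    rfl
  have hG : ∀ (w : Fin n → ℝ) (i j : Fin n),
      FSE.GSum v g S w = FSE.GSum v g S (FSE.swapW w i j) := by
    intro w i j
    rw [← hGfin w, ← hGfin (FSE.swapW w i j)]
    exact hsym (Equiv.swap i j) w
  have hva : ∀ r ∈ S, ∀ ℓ, FSE.aTop (FSE.scoreV v r) ≤ v ℓ := by
    intro r hr ℓ
    have hwS : FSE.scoreV v r ∈ S.image (FSE.scoreV v) := Finset.mem_image_of_mem _ hr
    have hpos : 0 < FSE.GSum v g S (FSE.scoreV v r) := FSE.GSum_pos v g S hS hg0 hwS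
    have h2 : FSE.GSum v g S
        (FSE.swapW (FSE.scoreV v r) (FSE.iTop (FSE.scoreV v r)) ℓ) ≠ 0 := by
      rw [← hG]
      exact hpos.ne'
    obtain ⟨r', hr'S, hr'w⟩ :=
      Finset.mem_image.1 (FSE.mem_image_of_GSum_ne v g S hS h2)
    have hval : v ℓ * r' ℓ = FSE.aTop (FSE.scoreV v r) := by
      have h3 : FSE.scoreV v r' ℓ
          = FSE.swapW (FSE.scoreV v r) (FSE.iTop (FSE.scoreV v r)) ℓ ℓ := congrFun hr'w ℓ
      calc v ℓ * r' ℓ = FSE.scoreV v r' ℓ := rfl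
        _ = FSE.scoreV v r (Equiv.swap (FSE.iTop (FSE.scoreV v r)) ℓ ℓ) := h3
        _ = FSE.scoreV v r (FSE.iTop (FSE.scoreV v r)) := by rw [Equiv.swap_apply_right]
        _ = FSE.aTop (FSE.scoreV v r) := FSE.w_iTop _
    calc FSE.aTop (FSE.scoreV v r) = v ℓ * r' ℓ := hval.symm
      _ ≤ v ℓ * 1 := mul_le_mul_of_nonneg_left (hg01 r' ((hS r').2 hr'S) ℓ).2 (hv ℓ)
      _ = v ℓ := mul_one _
  have hSurplus : (∑ᶠ r : Fin n → ℝ, g r * (⨆ i, v i * r i))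
      = ∑ r ∈ S, g r * FSE.aTop (FSE.scoreV v r) := by
    have hsub : Function.support (fun r => g r * (⨆ i, v i * r i)) ⊆ ↑S := by
      intro r hr
      apply (hS r).1
      intro h
      apply hr
      simp [h]
    rw [finsum_eq_sum_of_support_subset _ hsub]
    rfl
  set Sur : ℝ := ∑ r ∈ S, g r * FSE.aTop (FSE.scoreV v r) with hSurdef
  have hSur0 : 0 ≤ Sur := Finset.sum_nonneg fun r hr =>
    mul_nonneg (hg0 r) (FSE.aTop_nonneg _ (FSE.scoreV_nonneg' hv (hr01 r hr)))
  set K : ℕ := Nat.ceil (2 * Sur / ε) with hKdef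
  refine ⟨FSE.xC v g S K, ⟨?_, ?_, ?_, ?_⟩, ?_, ?_⟩
  · exact Set.Finite.subset (Finset.finite_toSet _) (FSE.xC_support_sub v g S K)
  · exact FSE.xC_nonneg v g S K hg0
  · intro p hp i
    obtain ⟨t, ht, hwt, hpt⟩ := FSE.xC_ne_imp v g S K hp
    obtain ⟨hrS, hjk⟩ := Finset.mem_product.1 ht
    have hj : t.2.1 ∈ FSE.Jset (FSE.scoreV v t.1) := by
      by_contra hj
      exact hwt (by rw [FSE.wt, if_neg hj])
    have hk : t.2.2 ≤ K := by
      have h : t.2.2 ∈ Finset.range (K + 1) := (Finset.mem_product.1 hjk).2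
      exact Nat.lt_succ_iff.mp (Finset.mem_range.1 h)
    rw [hpt]
    exact FSE.prof_bounds v K hn hv (hr01 t.1 hrS) (hva t.1 hrS) hj hk i
  · exact FSE.xC_marginal v g S K hn hS
  · intro i c _ _
    exact FSE.xC_calibrated v g S K hn hv hS hg0 hr01 hva hG i c
  · have hrev := FSE.xC_revenue v g S K hn hv hS hg0 hr01 hva
    rw [hSurplus]
    have hK1 : (0:ℝ) < (K : ℝ) + 1 := by positivity
    have hKbound : 2 / ((K : ℝ) + 1) * Sur ≤ ε := by
      rcases eq_or_lt_of_le hSur0 with h0 | hpos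
      · rw [← h0, mul_zero]
        exact hε.le
      · have h1 : 2 * Sur / ε ≤ (K : ℝ) := by
          rw [hKdef]
          exact Nat.le_ceil _
        have h2 : 2 * Sur ≤ ε * ((K : ℝ) + 1) := by
          rw [div_le_iff₀ hε] at h1
          nlinarith
        rw [div_mul_eq_mul_div, div_le_iff₀ hK1]
        nlinarith
    calc Sur - ε ≤ Sur - 2 / ((K : ℝ) + 1) * Sur := by linarith
      _ = (1 - 2 / ((K : ℝ) + 1)) * Sur := by ring
      _ ≤ RevN v (FSE.xC v g S K) := hrev
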